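/- Let p be an odd prime and k a nonnegative integer. Then C_{p-2}^{(-k-1)} ≡ 0 (mod p) if k is not divisible by p-1, and C_{p-2}^{(-k-1)} ≡ 1 (mod p) if k is divisible by p-1. -/
import Mathlib


/-- Stirling numbers of the second kind. -/
def stirling2 : ℕ → ℕ → ℕ
  | 0, 0 => 1
  | 0, _ + 1 => 0
  | _ + 1, 0 => 0
  | n + 1, m + 1 => (m + 1) * stirling2 n (m + 1) + stirling2 n m

/-- The poly-Bernoulli number `B_n^{(-k)}` with negative upper index `-k`. -/
def polyBernoulliB (k n : ℕ) : ℤ :=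
  (-1 : ℤ) ^ n * ∑ m ∈ Finset.range (n + 1),
    (-1 : ℤ) ^ m * (m.factorial : ℤ) * (stirling2 n m : ℤ) * ((m : ℤ) + 1) ^ k

/-- The poly-Bernoulli number of type C, `C_n^{(-k)}`, with negative upper index `-k`. -/
def polyBernoulliC (k n : ℕ) : ℤ :=
  (-1 : ℤ) ^ n * ∑ m ∈ Finset.range (n + 1),
    (-1 : ℤ) ^ m * (m.factorial : ℤ) * (stirling2 (n + 1) (m + 1) : ℤ) * ((m : ℤ) + 1) ^ k

lemma sum_shift (n m : ℕ) :
    ∑ j ∈ Finset.range (m + 2), (-1 : ℤ) ^ j * ((m+1).choose j : ℤ) * (j : ℤ) ^ (n+1)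
      = (m+1) * (∑ j ∈ Finset.range (m + 2), (-1 : ℤ) ^ j * ((m+1).choose j : ℤ) * (j : ℤ) ^ n)
        - (m+1) * (∑ j ∈ Finset.range (m + 1), (-1 : ℤ) ^ j * (m.choose j : ℤ) * (j : ℤ) ^ n) := by
  have h3 : (∑ j ∈ Finset.range (m + 2), (-1 : ℤ) ^ j * (m.choose j : ℤ) * (j : ℤ) ^ n)
      = ∑ j ∈ Finset.range (m + 1), (-1 : ℤ) ^ j * (m.choose j : ℤ) * (j : ℤ) ^ n := by
    rw [Finset.sum_range_succ]
    simp [Nat.choose_succ_self]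
  rw [← h3, Finset.mul_sum, Finset.mul_sum, ← Finset.sum_sub_distrib]
  refine Finset.sum_congr rfl fun j _ => ?_
  match j with
  | 0 => simp
  | i + 1 =>
    have hpas : (((m+1).choose (i+1) : ℤ)) - (m.choose (i+1) : ℤ) = (m.choose i : ℤ) := by
      have := Nat.choose_succ_succ m i
      push_cast [this]; ring
    have hmc : ((m:ℤ)+1) * (m.choose i : ℤ) = ((m+1).choose (i+1) : ℤ) * ((i:ℤ)+1) := by
      have h2 : ((Nat.succ m * m.choose i : ℕ) : ℤ) = (((m+1).choose (i+1) * (i+1) : ℕ) : ℤ) := by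
        rw [Nat.add_one_mul_choose_eq m i]
      push_cast at h2
      linarith [h2]
    push_cast
    calc (-1:ℤ) ^ (i+1) * ((m+1).choose (i+1) : ℤ) * ((i:ℤ)+1) ^ (n+1)
        = (-1:ℤ) ^ (i+1) * (((m+1).choose (i+1) : ℤ) * ((i:ℤ)+1)) * ((i:ℤ)+1) ^ n := by ring
      _ = (-1:ℤ) ^ (i+1) * (((m:ℤ)+1) * (m.choose i : ℤ)) * ((i:ℤ)+1) ^ n := by rw [hmc]
      _ = ((m:ℤ)+1) * ((-1:ℤ)^(i+1) * ((((m+1).choose (i+1) : ℤ)) - (m.choose (i+1) : ℤ)) * ((i:ℤ)+1)^n) := by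
          rw [hpas]; ring
      _ = _ := by ring

lemma key (n : ℕ) : ∀ m : ℕ, (m.factorial : ℤ) * (stirling2 n m : ℤ)
    = (-1) ^ m * ∑ j ∈ Finset.range (m + 1), (-1 : ℤ) ^ j * (m.choose j : ℤ) * (j : ℤ) ^ n := by
  induction n with
  | zero =>
    intro m
    match m with
    | 0 => simp [stirling2]
    | m + 1 =>
      have : (∑ j ∈ Finset.range (m + 2), (-1 : ℤ) ^ j * ((m+1).choose j : ℤ) * (j : ℤ) ^ 0)
          = ∑ j ∈ Finset.range (m + 2), ((-1 : ℤ) ^ j * ((m+1).choose j : ℤ)) := by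
        simp
      rw [this, Int.alternating_sum_range_choose_of_ne (Nat.succ_ne_zero m)]
      simp [stirling2]
  | succ n ih =>
    intro m
    match m with
    | 0 => simp [stirling2]
    | m + 1 =>
      have hrec : (stirling2 (n+1) (m+1) : ℤ)
          = ((m:ℤ)+1) * (stirling2 n (m+1) : ℤ) + (stirling2 n m : ℤ) := by
        show ((((m + 1) * stirling2 n (m + 1) + stirling2 n m : ℕ)) : ℤ) = _
        push_cast; ring
      have hfac : ((m+1).factorial : ℤ) = ((m:ℤ)+1) * (m.factorial : ℤ) := by
        push_cast [Nat.factorial_succ]; ring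
      have i1 := ih (m+1)
      have i2 := ih m
      have hs := sum_shift n m
      linear_combination (((m+1).factorial : ℤ)) * hrec + ((m:ℤ)+1) * i1
        + (stirling2 n m : ℤ) * hfac + ((m:ℤ)+1) * i2 + (-1:ℤ)^m * hs

lemma key2 (p : ℕ) [hpf : Fact p.Prime] (m : ℕ) (hm : m + 1 < p) :
    ((m+1).factorial : ZMod p) * (stirling2 (p-1) (m+1) : ZMod p) = (-1) ^ m := by
  have h := key (p-1) (m+1)
  have h2 := congrArg (fun z : ℤ => (z : ZMod p)) h
  simp only [Int.cast_mul, Int.cast_natCast, Int.cast_pow, Int.cast_neg, Int.cast_one,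
    Int.cast_sum] at h2
  rw [h2]
  have hp2 : 2 ≤ p := hpf.out.two_le
  have hsum : (∑ j ∈ Finset.range (m + 1 + 1),
      (-1 : ZMod p) ^ j * ((m+1).choose j : ZMod p) * ((j : ℕ) : ZMod p) ^ (p-1)) = -1 := by
    rw [Finset.sum_range_succ']
    have h0 : ((0 : ℕ) : ZMod p) ^ (p-1) = 0 := by
      rw [Nat.cast_zero, zero_pow (by omega)]
    rw [h0]
    have hterm : ∀ i ∈ Finset.range (m+1),
        (-1 : ZMod p) ^ (i+1) * ((m+1).choose (i+1) : ZMod p) * (((i+1 : ℕ)) : ZMod p) ^ (p-1)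
          = (-1 : ZMod p) ^ (i+1) * ((m+1).choose (i+1) : ZMod p) := by
      intro i hi
      have hlt : i + 1 < p := by
        have := Finset.mem_range.mp hi; omega
      have hne : (((i+1 : ℕ)) : ZMod p) ≠ 0 := by
        rw [Ne, ZMod.natCast_eq_zero_iff]
        intro hdvd
        have := Nat.le_of_dvd (by omega) hdvd
        omega
      rw [ZMod.pow_card_sub_one_eq_one hne, mul_one]
    rw [Finset.sum_congr rfl hterm]
    have halt : (∑ j ∈ Finset.range (m + 1 + 1),
        (-1 : ZMod p) ^ j * ((m+1).choose j : ZMod p)) = 0 := by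
      have h3 := Int.alternating_sum_range_choose_of_ne (Nat.succ_ne_zero m)
      have h4 := congrArg (fun z : ℤ => (z : ZMod p)) h3
      simpa using h4
    rw [Finset.sum_range_succ'] at halt
    simp only [pow_zero, Nat.choose_zero_right, Nat.cast_one, one_mul, mul_one] at halt ⊢
    linear_combination halt
  rw [hsum, pow_succ]
  ring

theorem polyBernoulliC_sub_two_prime' (p : ℕ) (hp : p.Prime) (hodd : Odd p) (k : ℕ) :
    ((polyBernoulliC (k + 1) (p - 2) : ℤ) : ZMod p)
      = if (p - 1) ∣ k then 1 else 0 := by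
  haveI : Fact p.Prime := ⟨hp⟩
  have hp3 : 3 ≤ p := by
    obtain ⟨t, ht⟩ := hodd
    have := hp.two_le
    omega
  have hodd2 : Odd (p - 2) := by
    obtain ⟨t, ht⟩ := hodd
    exact ⟨t - 1, by omega⟩
  unfold polyBernoulliC
  push_cast
  have hpe : p - 2 + 1 = p - 1 := by omega
  rw [hpe]
  have hterm : ∀ m ∈ Finset.range (p-1),
      (-1 : ZMod p) ^ m * (m.factorial : ZMod p) * (stirling2 (p-1) (m+1) : ZMod p)
        * ((m : ZMod p) + 1) ^ (k+1)
      = ((m : ZMod p) + 1) ^ k := by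
    intro m hm
    have hm1 : m + 1 < p := by
      have := Finset.mem_range.mp hm; omega
    have hk2 := key2 p m hm1
    have hne : ((m : ZMod p) + 1) ≠ 0 := by
      have : (((m+1 : ℕ)) : ZMod p) ≠ 0 := by
        rw [Ne, ZMod.natCast_eq_zero_iff]
        intro hdvd
        have := Nat.le_of_dvd (by omega) hdvd
        omega
      push_cast at this
      exact this
    apply mul_left_cancel₀ hne
    have hfac2 : ((m : ZMod p) + 1) * (m.factorial : ZMod p) = ((m+1).factorial : ZMod p) := by
      push_cast [Nat.factorial_succ]; ring
    have hsq : (-1 : ZMod p) ^ m * (-1 : ZMod p) ^ m = 1 := by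
      rw [← pow_add, ← two_mul, pow_mul, neg_one_sq, one_pow]
    calc ((m : ZMod p) + 1) * ((-1 : ZMod p) ^ m * (m.factorial : ZMod p)
            * (stirling2 (p-1) (m+1) : ZMod p) * ((m : ZMod p) + 1) ^ (k+1))
        = (-1 : ZMod p) ^ m * (((m : ZMod p) + 1) * (m.factorial : ZMod p))
            * (stirling2 (p-1) (m+1) : ZMod p) * ((m : ZMod p) + 1) ^ (k+1) := by ring
      _ = (-1 : ZMod p) ^ m * (((m+1).factorial : ZMod p)
            * (stirling2 (p-1) (m+1) : ZMod p)) * ((m : ZMod p) + 1) ^ (k+1) := by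
          rw [hfac2]; ring
      _ = (-1 : ZMod p) ^ m * (-1 : ZMod p) ^ m * ((m : ZMod p) + 1) ^ (k+1) := by rw [hk2]
      _ = ((m : ZMod p) + 1) ^ (k+1) := by rw [hsq, one_mul]
      _ = ((m : ZMod p) + 1) * ((m : ZMod p) + 1) ^ k := by rw [pow_succ]; ring
  rw [Finset.sum_congr rfl hterm]
  have hcop : ∀ m ∈ Finset.range (p-1), Nat.Coprime (m+1) p := by
    intro m hm'
    have hmlt : m + 1 < p := by have := Finset.mem_range.mp hm'; omega
    exact Nat.Coprime.symm (hp.coprime_iff_not_dvd.mpr (fun hdvd => by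
      have := Nat.le_of_dvd (by omega) hdvd; omega))
  have hbij : (∑ m ∈ Finset.range (p-1), ((m : ZMod p) + 1) ^ k)
      = ∑ x : (ZMod p)ˣ, ((x : ZMod p)) ^ k := by
    refine Finset.sum_bij' (fun m hm => ZMod.unitOfCoprime (m+1) (hcop m hm))
      (fun x _ => (x : ZMod p).val - 1) ?_ ?_ ?_ ?_ ?_
    · intro a ha; exact Finset.mem_univ _
    · intro x _
      have hvlt := ZMod.val_lt (x : ZMod p)
      have hvne : (x : ZMod p).val ≠ 0 := by
        rw [Ne, ZMod.val_eq_zero]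
        exact x.ne_zero
      show (x : ZMod p).val - 1 ∈ Finset.range (p-1)
      rw [Finset.mem_range]
      omega
    · intro m hm'
      have hmlt : m + 1 < p := by have := Finset.mem_range.mp hm'; omega
      show ((ZMod.unitOfCoprime (m+1) (hcop m hm') : ZMod p)).val - 1 = m
      rw [ZMod.coe_unitOfCoprime, ZMod.val_natCast, Nat.mod_eq_of_lt hmlt]
      omega
    · intro x hx
      have hvne : (x : ZMod p).val ≠ 0 := by
        rw [Ne, ZMod.val_eq_zero]
        exact x.ne_zero
      show ZMod.unitOfCoprime ((x : ZMod p).val - 1 + 1) _ = x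
      ext
      rw [ZMod.coe_unitOfCoprime]
      have h1 : (x : ZMod p).val - 1 + 1 = (x : ZMod p).val := by omega
      rw [h1, ZMod.natCast_rightInverse (x : ZMod p)]
    · intro m hm'
      show ((m : ZMod p) + 1) ^ k = ((ZMod.unitOfCoprime (m+1) (hcop m hm') : ZMod p)) ^ k
      rw [ZMod.coe_unitOfCoprime]
      push_cast
      ring
  rw [hbij]
  have hq := FiniteField.sum_pow_units (ZMod p) k
  rw [ZMod.card] at hq
  rw [hq, Odd.neg_one_pow hodd2]
  split_ifs <;> ring

theorem polyBernoulliC_sub_two_prime (p : ℕ) (hp : p.Prime) (hodd : Odd p) (k : ℕ) :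
    (¬ (p - 1) ∣ k → polyBernoulliC (k + 1) (p - 2) ≡ 0 [ZMOD (p : ℤ)]) ∧
    ((p - 1) ∣ k → polyBernoulliC (k + 1) (p - 2) ≡ 1 [ZMOD (p : ℤ)]) := by
  have h := polyBernoulliC_sub_two_prime' p hp hodd k
  constructor
  · intro hnd
    rw [if_neg hnd] at h
    have h2 : ((polyBernoulliC (k+1) (p-2) : ℤ) : ZMod p) = ((0 : ℤ) : ZMod p) := by
      simpa using h
    exact (ZMod.intCast_eq_intCast_iff _ _ _).mp h2
  · intro hd
    rw [if_pos hd] at h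
    have h2 : ((polyBernoulliC (k+1) (p-2) : ℤ) : ZMod p) = ((1 : ℤ) : ZMod p) := by
      simpa using h
    exact (ZMod.intCast_eq_intCast_iff _ _ _).mp h2
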